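/- Let x and t be real numbers with 1 - 2tx + t² > 0 and x ≠ t. Then 3·F(t,x)²·F^{(1)}(t,x) = F^{(1)}(t,x)/(x-t)² + F^{(2)}(t,x)/(x-t). -/

import Mathlib

private lemma hu_deriv (x : ℝ) : ∀ s : ℝ, HasDerivAt (fun s : ℝ => 1 - 2 * s * x + s ^ 2)
    (2 * s - 2 * x) s := by
  intro s
  have h1 : HasDerivAt (fun s : ℝ => 1 - 2 * s * x + s ^ 2)
      ((0 - 2 * 1 * x) + 2 * s ^ 1) s := by
    exact ((hasDerivAt_const s (1:ℝ)).sub (((hasDerivAt_id s).const_mul 2).mul_const x)).add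
      (hasDerivAt_pow 2 s)
  convert h1 using 1; ring

private lemma hf_deriv (x : ℝ) : ∀ s : ℝ, 1 - 2 * s * x + s ^ 2 > 0 →
    HasDerivAt (fun s : ℝ => (1 - 2 * s * x + s ^ 2) ^ (-(1 : ℝ) / 2))
      ((x - s) * (1 - 2 * s * x + s ^ 2) ^ (-(3 : ℝ) / 2)) s := by
  intro s hs
  have h1 := (hu_deriv x s).rpow_const (p := -(1:ℝ)/2) (Or.inl hs.ne')
  convert h1 using 1
  rw [show (-(1:ℝ)/2 - 1) = -(3:ℝ)/2 by norm_num]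
  ring

/-- For real `x` and `t` with `1 - 2tx + t² > 0` and `x ≠ t`, the function
`F(t,x) = (1 - 2tx + t²)^(-1/2)` satisfies
`3·F²·F⁽¹⁾ = F⁽¹⁾/(x-t)² + F⁽²⁾/(x-t)`. -/
theorem legendre_genFun_sq_mul_deriv (x t : ℝ) (h : 1 - 2 * t * x + t ^ 2 > 0) (hxt : x ≠ t) :
    3 * ((1 - 2 * t * x + t ^ 2) ^ (-(1 : ℝ) / 2)) ^ 2
        * iteratedDeriv 1 (fun s : ℝ => (1 - 2 * s * x + s ^ 2) ^ (-(1 : ℝ) / 2)) t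
      = iteratedDeriv 1 (fun s : ℝ => (1 - 2 * s * x + s ^ 2) ^ (-(1 : ℝ) / 2)) t / (x - t) ^ 2
        + iteratedDeriv 2 (fun s : ℝ => (1 - 2 * s * x + s ^ 2) ^ (-(1 : ℝ) / 2)) t / (x - t) := by
  set f : ℝ → ℝ := fun s : ℝ => (1 - 2 * s * x + s ^ 2) ^ (-(1 : ℝ) / 2) with hf
  set g : ℝ → ℝ := fun s : ℝ => (x - s) * (1 - 2 * s * x + s ^ 2) ^ (-(3 : ℝ) / 2) with hg
  have hcont : Continuous fun s : ℝ => 1 - 2 * s * x + s ^ 2 := by continuity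
  have ho : IsOpen {s : ℝ | 0 < 1 - 2 * s * x + s ^ 2} := isOpen_lt continuous_const hcont
  have hmem : {s : ℝ | 0 < 1 - 2 * s * x + s ^ 2} ∈ nhds t := ho.mem_nhds h
  have heq : deriv f =ᶠ[nhds t] g :=
    Filter.eventuallyEq_of_mem hmem fun s hs => (hf_deriv x s hs).deriv
  have hd1 : iteratedDeriv 1 f t = (x - t) * (1 - 2 * t * x + t ^ 2) ^ (-(3 : ℝ) / 2) := by
    rw [iteratedDeriv_one]
    exact (hf_deriv x t h).deriv
  have hgd : HasDerivAt g
      ((-1) * (1 - 2 * t * x + t ^ 2) ^ (-(3 : ℝ) / 2)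
        + (x - t) * ((2 * t - 2 * x) * (-(3:ℝ)/2) * (1 - 2 * t * x + t ^ 2) ^ (-(5 : ℝ) / 2))) t := by
    have hA : HasDerivAt (fun s : ℝ => x - s) (-1 : ℝ) t := by
      exact (hasDerivAt_id' t).const_sub x
    have hB := (hu_deriv x t).rpow_const (p := -(3:ℝ)/2) (Or.inl h.ne')
    have := hA.mul hB
    rw [show (-(3:ℝ)/2 - 1) = -(5:ℝ)/2 by norm_num] at this
    exact this
  have hd2 : iteratedDeriv 2 f t =
      (-1) * (1 - 2 * t * x + t ^ 2) ^ (-(3 : ℝ) / 2)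
        + (x - t) * ((2 * t - 2 * x) * (-(3:ℝ)/2) * (1 - 2 * t * x + t ^ 2) ^ (-(5 : ℝ) / 2)) := by
    rw [show iteratedDeriv 2 f t = iteratedDeriv (1 + 1) f t from rfl, iteratedDeriv_succ, iteratedDeriv_one, heq.deriv_eq]
    exact hgd.deriv
  rw [hd1, hd2]
  set A : ℝ := 1 - 2 * t * x + t ^ 2
  have h32 : A ^ (-(3:ℝ)/2) = (A ^ (-(1:ℝ)/2)) ^ 3 := by
    rw [show ((A ^ (-(1:ℝ)/2)) ^ 3 : ℝ) = (A ^ (-(1:ℝ)/2)) ^ ((3:ℕ):ℝ) by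
      rw [Real.rpow_natCast], ← Real.rpow_mul h.le]
    norm_num
  have h52 : A ^ (-(5:ℝ)/2) = (A ^ (-(1:ℝ)/2)) ^ 5 := by
    rw [show ((A ^ (-(1:ℝ)/2)) ^ 5 : ℝ) = (A ^ (-(1:ℝ)/2)) ^ ((5:ℕ):ℝ) by
      rw [Real.rpow_natCast], ← Real.rpow_mul h.le]
    norm_num
  rw [h32, h52]
  have hxt' : x - t ≠ 0 := sub_ne_zero.mpr hxt
  field_simp
  ring
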